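/- For every m ∈ ℕ and every f ∈ H^{(m,m)}(Ω), the function C_φ f lies in the domain of D_y^m and D_y^m (C_φ f) = Σ_{i=0}^{m} 2^{m−i} binom(m,i) C_φ (D_x^{m−i} D_y^{i} f). -/

import Mathlib

open MeasureTheory Complex Filter Topology

noncomputable section

instance : Fact (0 < 2 * Real.pi) := ⟨by positivity⟩
instance : Fact (0 < Real.pi) := ⟨Real.pi_pos⟩

/-- The phase space `Ω = (ℝ/2πℤ) × (ℝ/πℤ)`. -/
abbrev Omg : Type := AddCircle (2 * Real.pi) × AddCircle Real.pi

/-- The normalised Lebesgue measure `dm = dx dy / (2π²)` on `Ω`. -/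
def mOmg : Measure Omg := (ENNReal.ofReal (2 * Real.pi ^ 2))⁻¹ • volume

/-- The Fourier basis functions `e_k(x,y) = exp(i k₁ x) exp(2 i k₂ y)`. -/
def eB (k : ℤ × ℤ) : Omg → ℂ := fun p => fourier k.1 p.1 * fourier k.2 p.2

/-- Fourier coefficient `c_k(f) = (f, e_k)_{L²}`. -/
def coef (k : ℤ × ℤ) (f : Omg → ℂ) : ℂ := ∫ p, f p * (starRingEnd ℂ) (eB k p) ∂mOmg

/-- Sobolev weight `a_s(k) = 1 + |k₁|^{2s₁} + |2k₂|^{2s₂}` (real exponents). -/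
def aW (s : ℝ × ℝ) (k : ℤ × ℤ) : ℝ :=
  1 + |(k.1 : ℝ)| ^ (2 * s.1) + |2 * (k.2 : ℝ)| ^ (2 * s.2)

/-- Membership in the Sobolev space `H^s(Ω)`. -/
def MemHs (s : ℝ × ℝ) (f : Omg → ℂ) : Prop :=
  MemLp f 2 mOmg ∧ Summable (fun k => aW s k * ‖coef k f‖ ^ 2)

/-- The Sobolev norm `‖f‖_{H^s}`. -/
def normHs (s : ℝ × ℝ) (f : Omg → ℂ) : ℝ :=
  Real.sqrt (∑' k, aW s k * ‖coef k f‖ ^ 2)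

/-- The doubling map `ℝ/πℤ → ℝ/2πℤ`, `y ↦ 2y`. -/
def dbl : AddCircle Real.pi → AddCircle (2 * Real.pi) :=
  AddCircle.equivAddCircle Real.pi (2 * Real.pi) Real.pi_ne_zero (by positivity)

/-- The inverse billiard collision map `φ(x,y) = (x - π + 2y, y)`. -/
def phi : Omg → Omg :=
  fun p => (p.1 - ((Real.pi : ℝ) : AddCircle (2 * Real.pi)) + dbl p.2, p.2)

/-- The composition operator `(C_φ f)(x,y) = f(φ(x,y))`. -/
def Cphi : (Omg → ℂ) → (Omg → ℂ) := fun f p => f (phi p)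

/-- The multiplication operator `(M_w f)(x,y) = w(x,y) f(x,y)`. -/
def Mw (w : Omg → ℝ) : (Omg → ℂ) → (Omg → ℂ) := fun f p => (w p : ℂ) * f p

/-- The transfer operator `L = M_w C_φ`. -/
def Lop (w : Omg → ℝ) : (Omg → ℂ) → (Omg → ℂ) := fun f => Mw w (Cphi f)

/-- The frequency cut-off set `Λ_K = {k : |k₁| < K, |k₂| < K}`. -/
def Lam (K : ℕ) : Finset (ℤ × ℤ) := Finset.Ioo (-(K : ℤ)) (K : ℤ) ×ˢ Finset.Ioo (-(K : ℤ)) (K : ℤ)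

/-- The Fourier projection `P_Λ f = ∑_{k ∈ Λ} c_k(f) e_k`. -/
def PL (Λ : Finset (ℤ × ℤ)) : (Omg → ℂ) → (Omg → ℂ) :=
  fun f p => ∑ k ∈ Λ, coef k f * eB k p

/-- The finite-rank approximation `L_K = P_K M_w C_φ P_K`. -/
def LK (w : Omg → ℝ) (K : ℕ) : (Omg → ℂ) → (Omg → ℂ) :=
  fun f => PL (Lam K) (Lop w (PL (Lam K) f))

/-- Operator norm of a map `T`, viewed from `H^s` to `H^t`. -/
def opN (s t : ℝ × ℝ) (T : (Omg → ℂ) → (Omg → ℂ)) : ℝ :=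
  sInf {M : ℝ | 0 ≤ M ∧ ∀ f, MemHs s f → normHs t (T f) ≤ M * normHs s f}

/-- `‖w‖_∞` for a (positive bounded) weight. -/
def wSup (w : Omg → ℝ) : ℝ := sSup (Set.range w)

/-- The standing assumptions on the weight `w`: smooth, positive, bounded away from
zero, `‖w‖_∞ < 1`, and independent of the first argument. -/
structure GoodWeight (w : Omg → ℝ) : Prop where
  pos : ∀ p, 0 < w p
  smooth : ∃ W : ℝ → ℝ, ContDiff ℝ (⊤ : ℕ∞) W ∧
    ∀ (x : AddCircle (2 * Real.pi)) (y : ℝ), w (x, (y : AddCircle Real.pi)) = W y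
  bdd_below : ∃ ε > 0, ∀ p, ε ≤ w p
  lt_one : sSup (Set.range w) < 1
  indep : ∀ (x x' : AddCircle (2 * Real.pi)) (y : AddCircle Real.pi), w (x, y) = w (x', y)

/-- The matrix `A = [[1,0],[1,1]]` acting on frequencies `(k₁,k₂) ↦ (k₁, k₁+k₂)`. -/
def Amap : ℤ × ℤ → ℤ × ℤ := fun k => (k.1, k.1 + k.2)

/-- `IsD i j f g` : `g = D_x^i D_y^j f` in the weak (Fourier) sense, both in `L²`. -/
def IsD (i j : ℕ) (f g : Omg → ℂ) : Prop :=
  MemLp f 2 mOmg ∧ MemLp g 2 mOmg ∧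
    ∀ k : ℤ × ℤ, coef k g = (Complex.I * (k.1 : ℂ)) ^ i * (2 * Complex.I * (k.2 : ℂ)) ^ j * coef k f

/-! ### Auxiliary lemmas for `stmt17` -/

lemma dbl_continuous : Continuous dbl :=
  (AddCircle.homeomorphAddCircle Real.pi (2 * Real.pi) Real.pi_ne_zero
    (by positivity)).continuous

lemma dbl_coe (y : ℝ) : dbl (y : AddCircle Real.pi) = ((2 * y : ℝ) : AddCircle (2 * Real.pi)) := by
  rw [dbl, AddCircle.equivAddCircle_apply_mk]
  congr 1
  field_simp

/-- `φ` as a homeomorphism. -/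
def phiH : Omg ≃ₜ Omg where
  toFun := phi
  invFun := fun p => (p.1 + ((Real.pi : ℝ) : AddCircle (2 * Real.pi)) - dbl p.2, p.2)
  left_inv := by
    intro p
    refine Prod.ext ?_ rfl
    show p.1 - ((Real.pi : ℝ) : AddCircle (2 * Real.pi)) + dbl p.2 +
      ((Real.pi : ℝ) : AddCircle (2 * Real.pi)) - dbl p.2 = p.1
    abel
  right_inv := by
    intro p
    refine Prod.ext ?_ rfl
    show p.1 + ((Real.pi : ℝ) : AddCircle (2 * Real.pi)) - dbl p.2 -
      ((Real.pi : ℝ) : AddCircle (2 * Real.pi)) + dbl p.2 = p.1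
    abel
  continuous_toFun := by
    show Continuous phi
    exact ((continuous_fst.sub continuous_const).add
      (dbl_continuous.comp continuous_snd)).prodMk continuous_snd
  continuous_invFun :=
    ((continuous_fst.add continuous_const).sub
      (dbl_continuous.comp continuous_snd)).prodMk continuous_snd

lemma phi_mp_volume : MeasurePreserving phi (volume : Measure Omg) volume := by
  have hswap : MeasurePreserving (Prod.swap : Omg → AddCircle Real.pi × AddCircle (2 * Real.pi))
      ((volume : Measure (AddCircle (2 * Real.pi))).prod volume)
      ((volume : Measure (AddCircle Real.pi)).prod volume) := Measure.measurePreserving_swap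
  have hswap' : MeasurePreserving (Prod.swap : AddCircle Real.pi × AddCircle (2 * Real.pi) → Omg)
      ((volume : Measure (AddCircle Real.pi)).prod volume)
      ((volume : Measure (AddCircle (2 * Real.pi))).prod volume) := Measure.measurePreserving_swap
  have hmeas : Measurable (Function.uncurry fun (b : AddCircle Real.pi)
      (a : AddCircle (2 * Real.pi)) => a + (dbl b - ((Real.pi : ℝ) : AddCircle (2 * Real.pi)))) :=
    measurable_snd.add ((dbl_continuous.measurable.comp measurable_fst).sub measurable_const)
  have hskew0 := MeasurePreserving.skew_product (f := @id (AddCircle Real.pi))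
      (MeasurePreserving.id (volume : Measure (AddCircle Real.pi)))
      (g := fun b a => a + (dbl b - ((Real.pi : ℝ) : AddCircle (2 * Real.pi)))) hmeas
      (μc := volume) (μd := volume)
      (ae_of_all _ fun b => (measurePreserving_add_right volume _).map_eq)
  have hskew : MeasurePreserving
      (fun p : AddCircle Real.pi × AddCircle (2 * Real.pi) =>
        (p.1, p.2 + (dbl p.1 - ((Real.pi : ℝ) : AddCircle (2 * Real.pi)))))
      ((volume : Measure (AddCircle Real.pi)).prod volume)
      ((volume : Measure (AddCircle Real.pi)).prod volume) := hskew0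
  have hcomp := (hswap'.comp hskew).comp hswap
  have heq : ((Prod.swap ∘ (fun p : AddCircle Real.pi × AddCircle (2 * Real.pi) =>
      (p.1, p.2 + (dbl p.1 - ((Real.pi : ℝ) : AddCircle (2 * Real.pi)))))) ∘ Prod.swap) = phi := by
    funext p
    simp only [Function.comp_apply, Prod.swap_prod_mk, Prod.fst_swap, Prod.snd_swap, phi]
    refine Prod.ext ?_ rfl
    show p.1 + (dbl p.2 - ((Real.pi : ℝ) : AddCircle (2 * Real.pi))) =
      p.1 - ((Real.pi : ℝ) : AddCircle (2 * Real.pi)) + dbl p.2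
    abel
  rw [heq] at hcomp
  exact hcomp

lemma phi_mp : MeasurePreserving phi mOmg mOmg := by
  refine ⟨phi_mp_volume.measurable, ?_⟩
  rw [mOmg, Measure.map_smul, phi_mp_volume.map_eq]

lemma phi_me : MeasurableEmbedding phi := phiH.measurableEmbedding

instance : IsFiniteMeasure mOmg := by
  constructor
  rw [mOmg, Measure.smul_apply, smul_eq_mul]
  exact ENNReal.mul_lt_top
    (ENNReal.inv_lt_top.2 (ENNReal.ofReal_pos.2 (by positivity))) (measure_lt_top _ _)

lemma eB_continuous (k : ℤ × ℤ) : Continuous (eB k) :=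
  ((fourier k.1).continuous.comp continuous_fst).mul
    ((fourier k.2).continuous.comp continuous_snd)

lemma eB_norm (k : ℤ × ℤ) (p : Omg) : ‖eB k p‖ = 1 := by
  rw [eB, norm_mul]
  simp [Circle.norm_coe]

lemma integrable_mul_conj_eB {f : Omg → ℂ} (hf : MemLp f 2 mOmg) (k : ℤ × ℤ) :
    Integrable (fun p => f p * (starRingEnd ℂ) (eB k p)) mOmg := by
  have hfi : Integrable f mOmg := hf.integrable one_le_two
  have := hfi.bdd_mul (f := fun p => (starRingEnd ℂ) (eB k p)) (c := 1)
    ((Complex.continuous_conj.comp (eB_continuous k)).aestronglyMeasurable)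
    (ae_of_all _ fun p => by rw [RCLike.norm_conj]; exact le_of_eq (eB_norm k p))
  simpa [mul_comm] using this

/-- The key change-of-variables identity for Fourier coefficients under `C_φ`. -/
lemma eB_phi (k : ℤ × ℤ) (p : Omg) :
    eB (k.1, k.2 - k.1) (phi p) =
      Complex.exp (-(Real.pi * Complex.I * k.1)) * eB k p := by
  obtain ⟨a, b⟩ := p
  induction a using QuotientAddGroup.induction_on with
  | H x =>
  induction b using QuotientAddGroup.induction_on with
  | H y =>
  have hphi : phi ((x : AddCircle (2 * Real.pi)), (y : AddCircle Real.pi)) =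
      (((x - Real.pi + 2 * y : ℝ) : AddCircle (2 * Real.pi)), (y : AddCircle Real.pi)) := by
    simp only [phi, dbl_coe]
    rw [Prod.mk.injEq]
    refine ⟨?_, rfl⟩
    rw [AddCircle.coe_add, AddCircle.coe_sub]
  rw [hphi, eB, eB]
  simp only
  rw [fourier_coe_apply, fourier_coe_apply, fourier_coe_apply, fourier_coe_apply,
    ← Complex.exp_add, ← Complex.exp_add, ← Complex.exp_add]
  congr 1
  have hπ : (Real.pi : ℂ) ≠ 0 := by
    simpa using Real.pi_ne_zero
  field_simp
  push_cast
  ring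

lemma coef_Cphi {f : Omg → ℂ} (k : ℤ × ℤ) :
    coef k (Cphi f) =
      Complex.exp (-(Real.pi * Complex.I * k.1)) * coef (k.1, k.2 - k.1) f := by
  have h2 : Complex.exp (-(Real.pi * Complex.I * k.1)) *
      Complex.exp (Real.pi * Complex.I * k.1) = 1 := by
    rw [← Complex.exp_add]; simp
  have h1 : ∀ p : Omg, Cphi f p * (starRingEnd ℂ) (eB k p) =
      Complex.exp (-(Real.pi * Complex.I * k.1)) *
        (f (phi p) * (starRingEnd ℂ) (eB (k.1, k.2 - k.1) (phi p))) := by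
    intro p
    rw [eB_phi k p, Cphi]
    rw [map_mul]
    have hc : (starRingEnd ℂ) (Complex.exp (-(Real.pi * Complex.I * k.1))) =
        Complex.exp (Real.pi * Complex.I * k.1) := by
      rw [← Complex.exp_conj]
      congr 1
      simp
    rw [hc]
    linear_combination (-(f (phi p) * (starRingEnd ℂ) (eB k p))) * h2
  rw [coef]
  simp_rw [h1]
  rw [integral_const_mul]
  congr 1
  exact phi_mp.integral_comp phi_me (fun q => f q * (starRingEnd ℂ) (eB (k.1, k.2 - k.1) q))

lemma memLp_Cphi {f : Omg → ℂ} (hf : MemLp f 2 mOmg) : MemLp (Cphi f) 2 mOmg :=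
  hf.comp_measurePreserving phi_mp

/-- Lemma 2.5(i): `D_y^m C_φ = ∑_{i=0}^m 2^{m−i} binom(m,i) C_φ D_x^{m−i} D_y^i`. -/
theorem stmt17 (m : ℕ) (hm : 1 ≤ m) (f : Omg → ℂ) (hf : MemHs ((m : ℝ), (m : ℝ)) f)
    (g : ℕ → Omg → ℂ) (hg : ∀ i ≤ m, IsD (m - i) i f (g i)) :
    IsD 0 m (Cphi f)
      (fun p => ∑ i ∈ Finset.range (m + 1),
        (2 : ℂ) ^ (m - i) * (m.choose i : ℂ) * Cphi (g i) p) := by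
  have hCg : ∀ i, i ≤ m → MemLp (Cphi (g i)) 2 mOmg := fun i hi =>
    memLp_Cphi (hg i hi).2.1
  refine ⟨memLp_Cphi hf.1, ?_, ?_⟩
  · have hsum := memLp_finset_sum' (μ := mOmg) (p := 2) (Finset.range (m + 1))
      (f := fun i p => (2 : ℂ) ^ (m - i) * (m.choose i : ℂ) * Cphi (g i) p)
      (fun i hi => (hCg i (Nat.lt_succ_iff.mp (Finset.mem_range.mp hi))).const_mul _)
    have heq : (∑ i ∈ Finset.range (m + 1),
        fun p => (2 : ℂ) ^ (m - i) * (m.choose i : ℂ) * Cphi (g i) p) =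
        (fun p => ∑ i ∈ Finset.range (m + 1),
          (2 : ℂ) ^ (m - i) * (m.choose i : ℂ) * Cphi (g i) p) := by
      funext p; simp
    rwa [heq] at hsum
  · intro k
    have hcoefsum : coef k (fun p => ∑ i ∈ Finset.range (m + 1),
        (2 : ℂ) ^ (m - i) * (m.choose i : ℂ) * Cphi (g i) p) =
        ∑ i ∈ Finset.range (m + 1),
          (2 : ℂ) ^ (m - i) * (m.choose i : ℂ) * coef k (Cphi (g i)) := by
      rw [coef]
      have hpt : ∀ p, (∑ i ∈ Finset.range (m + 1),
          (2 : ℂ) ^ (m - i) * (m.choose i : ℂ) * Cphi (g i) p) * (starRingEnd ℂ) (eB k p) =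
          ∑ i ∈ Finset.range (m + 1), (2 : ℂ) ^ (m - i) * (m.choose i : ℂ) *
            (Cphi (g i) p * (starRingEnd ℂ) (eB k p)) := by
        intro p
        rw [Finset.sum_mul]
        exact Finset.sum_congr rfl fun i _ => by ring
      simp_rw [hpt]
      rw [integral_finset_sum]
      · exact Finset.sum_congr rfl fun i hi => by rw [integral_const_mul]; rfl
      · intro i hi
        exact (integrable_mul_conj_eB
          (hCg i (Nat.lt_succ_iff.mp (Finset.mem_range.mp hi))) k).const_mul _
    rw [hcoefsum, coef_Cphi (f := f) k]
    have hck : ∀ i, i ≤ m → coef k (Cphi (g i)) =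
        Complex.exp (-(Real.pi * Complex.I * k.1)) *
          ((Complex.I * (k.1 : ℂ)) ^ (m - i) *
            (2 * Complex.I * ((k.2 - k.1 : ℤ) : ℂ)) ^ i * coef (k.1, k.2 - k.1) f) := by
      intro i hi
      rw [coef_Cphi k, (hg i hi).2.2 (k.1, k.2 - k.1)]
    have key : ∑ i ∈ Finset.range (m + 1), (2 : ℂ) ^ (m - i) * (m.choose i : ℂ) *
        ((Complex.I * (k.1 : ℂ)) ^ (m - i) * (2 * Complex.I * ((k.2 - k.1 : ℤ) : ℂ)) ^ i) =
        (2 * Complex.I * (k.2 : ℂ)) ^ m := by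
      have hab : (2 * Complex.I * ((k.2 - k.1 : ℤ) : ℂ)) + (2 * Complex.I * (k.1 : ℂ)) =
          2 * Complex.I * (k.2 : ℂ) := by push_cast; ring
      rw [← hab, add_pow]
      refine Finset.sum_congr rfl fun i hi => ?_
      rw [show (2 : ℂ) * Complex.I * (k.1 : ℂ) = 2 * (Complex.I * (k.1 : ℂ)) by ring, mul_pow]
      ring
    calc ∑ i ∈ Finset.range (m + 1), (2 : ℂ) ^ (m - i) * (m.choose i : ℂ) *
          coef k (Cphi (g i))
        = ∑ i ∈ Finset.range (m + 1), ((2 : ℂ) ^ (m - i) * (m.choose i : ℂ) *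
            ((Complex.I * (k.1 : ℂ)) ^ (m - i) *
              (2 * Complex.I * ((k.2 - k.1 : ℤ) : ℂ)) ^ i)) *
            (Complex.exp (-(Real.pi * Complex.I * k.1)) * coef (k.1, k.2 - k.1) f) := by
          refine Finset.sum_congr rfl fun i hi => ?_
          rw [hck i (Nat.lt_succ_iff.mp (Finset.mem_range.mp hi))]
          ring
      _ = (∑ i ∈ Finset.range (m + 1), (2 : ℂ) ^ (m - i) * (m.choose i : ℂ) *
            ((Complex.I * (k.1 : ℂ)) ^ (m - i) *
              (2 * Complex.I * ((k.2 - k.1 : ℤ) : ℂ)) ^ i)) *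
            (Complex.exp (-(Real.pi * Complex.I * k.1)) * coef (k.1, k.2 - k.1) f) :=
          (Finset.sum_mul _ _ _).symm
      _ = (Complex.I * (k.1 : ℂ)) ^ 0 * (2 * Complex.I * (k.2 : ℂ)) ^ m *
            (Complex.exp (-(Real.pi * Complex.I * k.1)) * coef (k.1, k.2 - k.1) f) := by
          rw [key]; ring

end
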